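/- Every real symmetric diagonally dominant matrix with nonnegative diagonal decomposes into 2×2 blocks: if M is an n×n real symmetric matrix with M_ii ≥ Σ_{j ≠ i} |M_ij| for every i, then M can be written as M = D + Σ_{i<j} [e_i, e_j] B_{ij} [e_i, e_j]ᵀ, where D is a diagonal matrix with nonnegative entries and each B_{ij} is a 2×2 real symmetric positive semidefinite matrix. In particular, every such M is positive semidefinite. -/

import Mathlib

open Matrix Finset

/-- The `n×n` real matrix `[e_i, e_j] B [e_i, e_j]ᵀ` supported on the principal submatrix
indexed by `{i, j}`, with entries given by the `2×2` matrix `B`. -/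
def emb2R {n : ℕ} (i j : Fin n) (B : Matrix (Fin 2) (Fin 2) ℝ) :
    Matrix (Fin n) (Fin n) ℝ :=
  Matrix.single i i (B 0 0) + Matrix.single i j (B 0 1) +
    Matrix.single j i (B 1 0) + Matrix.single j j (B 1 1)

lemma quad_std {n : ℕ} (i j : Fin n) (c : ℝ) (x : Fin n → ℝ) :
    x ⬝ᵥ (Matrix.single i j c) *ᵥ x = x i * c * x j := by
  simp [Matrix.single, Matrix.mulVec, dotProduct, Finset.mul_sum, ite_and,
    mul_ite]
  ring

lemma std_conjT {n : ℕ} (i j : Fin n) (c : ℝ) :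
    (Matrix.single i j c)ᴴ = Matrix.single j i c := by
  ext a b
  simp [Matrix.single, and_comm]

lemma symm2 (a : ℝ) : (!![|a|, a; a, |a|] : Matrix (Fin 2) (Fin 2) ℝ).IsSymm := by
  ext i j
  fin_cases i <;> fin_cases j <;> simp [Matrix.transpose_apply]

lemma psd2 (a : ℝ) : (!![|a|, a; a, |a|] : Matrix (Fin 2) (Fin 2) ℝ).PosSemidef := by
  rw [Matrix.posSemidef_iff_dotProduct_mulVec]
  constructor
  · ext i j
    fin_cases i <;> fin_cases j <;> simp
  · intro x
    simp [dotProduct, Matrix.mulVec, Fin.sum_univ_two]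
    nlinarith [sq_nonneg (x 0 + x 1), sq_nonneg (x 0 - x 1), abs_nonneg a,
      le_abs_self a, neg_abs_le a, mul_self_nonneg (x 0), mul_self_nonneg (x 1)]

lemma emb2R_psd {n : ℕ} (i j : Fin n) (a : ℝ) :
    (emb2R i j !![|a|, a; a, |a|]).PosSemidef := by
  rw [Matrix.posSemidef_iff_dotProduct_mulVec]
  constructor
  · show _ = _
    simp only [emb2R, conjTranspose_add, std_conjT]
    norm_num
    abel
  · intro x
    simp only [emb2R, Matrix.add_mulVec, dotProduct_add, quad_std, RCLike.star_def,
      star_trivial]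
    norm_num
    nlinarith [sq_nonneg (x i + x j), sq_nonneg (x i - x j), abs_nonneg a,
      le_abs_self a, neg_abs_le a, mul_self_nonneg (x i), mul_self_nonneg (x j)]

/-- Every real symmetric diagonally dominant matrix with nonnegative diagonal decomposes
as a nonnegative diagonal matrix plus a sum of PSD `2×2` principal embeddings; in
particular it is positive semidefinite. -/
theorem diagDominant_decomposition (n : ℕ)
    (M : Matrix (Fin n) (Fin n) ℝ) (hM : M.IsSymm)
    (hdd : ∀ i : Fin n, ∑ j ∈ Finset.univ.erase i, |M i j| ≤ M i i) :
    (∃ (D : Fin n → ℝ) (B : Fin n → Fin n → Matrix (Fin 2) (Fin 2) ℝ),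
        (∀ i, 0 ≤ D i) ∧
        (∀ i j : Fin n, i < j → (B i j).IsSymm ∧ (B i j).PosSemidef) ∧
        M = Matrix.diagonal D +
          ∑ p ∈ Finset.univ.filter (fun p : Fin n × Fin n => p.1 < p.2),
            emb2R p.1 p.2 (B p.1 p.2)) ∧
      M.PosSemidef := by
  have hs : ∀ i j : Fin n, M j i = M i j := hM.apply
  have hdecomp : M =
      Matrix.diagonal (fun i => M i i - ∑ j ∈ Finset.univ.erase i, |M i j|) +
      ∑ p ∈ Finset.univ.filter (fun p : Fin n × Fin n => p.1 < p.2),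
        emb2R p.1 p.2 !![|M p.1 p.2|, M p.1 p.2; M p.1 p.2, |M p.1 p.2|] := by
    ext a b
    rw [Matrix.add_apply, Matrix.sum_apply]
    rcases lt_trichotomy a b with hab | hab | hab
    · rw [Finset.sum_eq_single_of_mem (⟨a, b⟩ : Fin n × Fin n) (by simp [hab])]
      · simp [emb2R, Matrix.single, hab.ne, hab.ne', Matrix.diagonal_apply]
      · rintro ⟨i, j⟩ hp hne
        simp only [Finset.mem_filter] at hp
        have hij := hp.2
        simp only [emb2R, Matrix.add_apply]
        rw [Matrix.single_apply_of_ne, Matrix.single_apply_of_ne,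
          Matrix.single_apply_of_ne, Matrix.single_apply_of_ne]
        · ring
        · rintro ⟨rfl, rfl⟩; exact lt_irrefl _ hab
        · rintro ⟨rfl, rfl⟩; exact lt_asymm hij hab
        · rintro ⟨rfl, rfl⟩; exact hne rfl
        · rintro ⟨rfl, rfl⟩; exact lt_irrefl _ hab
    · subst hab
      have pull : ∀ (c : Prop) [Decidable c] (X : Fin n → ℝ),
          (∑ j, if c then X j else 0) = if c then ∑ j, X j else 0 := by
        intro c _ X; split_ifs <;> simp
      have h1 : ∀ p ∈ Finset.univ.filter (fun p : Fin n × Fin n => p.1 < p.2),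
          (emb2R p.1 p.2 !![|M p.1 p.2|, M p.1 p.2; M p.1 p.2, |M p.1 p.2|]) a a
          = (if p.1 = a then (if a < p.2 then |M a p.2| else 0) else 0)
            + (if p.2 = a then (if p.1 < a then |M a p.1| else 0) else 0) := by
        rintro ⟨i, j⟩ hp
        simp only [Finset.mem_filter] at hp
        have hij := hp.2
        simp only [emb2R, Matrix.add_apply, Matrix.single, Matrix.of_apply]
        rcases eq_or_ne i a with hi | hi <;> rcases eq_or_ne j a with hj | hj
        · exact absurd (hi.trans hj.symm) hij.ne
        · subst hi; simp [hj, hij]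
        · subst hj; simp [hi, hij, hs]
        · simp [hi, hj]
      rw [Finset.sum_congr rfl h1, Finset.sum_filter, Fintype.sum_prod_type]
      have h2 : ∀ i j : Fin n,
          (if i < j then
            (if i = a then (if a < j then |M a j| else 0) else 0)
            + (if j = a then (if i < a then |M a i| else 0) else 0) else 0)
          = (if i = a then (if a < j then |M a j| else 0) else 0)
            + (if j = a then (if i < a then |M a i| else 0) else 0) := by
        intro i j
        split_ifs <;> simp_all
      simp only [h2]
      rw [Finset.sum_congr rfl fun i _ => Finset.sum_add_distrib, Finset.sum_add_distrib]
      simp only [pull, Finset.sum_ite_eq' Finset.univ a, Finset.mem_univ, if_true]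
      have h3 : (∑ j ∈ Finset.univ.erase a, |M a j|)
          = ∑ j : Fin n, if j = a then 0 else |M a j| := by
        rw [← Finset.sum_erase Finset.univ
          (f := fun j => if j = a then 0 else |M a j|) (a := a) (by simp)]
        exact Finset.sum_congr rfl fun j hj => by simp [(Finset.mem_erase.mp hj).1]
      have h4 : (∑ j : Fin n, if j = a then 0 else |M a j|)
          = (∑ j : Fin n, if a < j then |M a j| else 0)
            + ∑ i : Fin n, if i < a then |M a i| else 0 := by
        rw [← Finset.sum_add_distrib]
        refine Finset.sum_congr rfl fun j _ => ?_
        rcases lt_trichotomy a j with h | h | h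
        · simp [h, lt_asymm h, h.ne, h.ne']
        · subst h; simp
        · simp [h, lt_asymm h, h.ne, h.ne']
      rw [Matrix.diagonal_apply_eq, ← h4, ← h3]
      ring
    · rw [Finset.sum_eq_single_of_mem (⟨b, a⟩ : Fin n × Fin n) (by simp [hab])]
      · simp [emb2R, Matrix.single, hab.ne, hab.ne', Matrix.diagonal_apply, hs]
      · rintro ⟨i, j⟩ hp hne
        simp only [Finset.mem_filter] at hp
        have hij := hp.2
        simp only [emb2R, Matrix.add_apply]
        rw [Matrix.single_apply_of_ne, Matrix.single_apply_of_ne,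
          Matrix.single_apply_of_ne, Matrix.single_apply_of_ne]
        · ring
        · rintro ⟨rfl, rfl⟩; exact lt_irrefl _ hab
        · rintro ⟨rfl, rfl⟩; exact hne rfl
        · rintro ⟨rfl, rfl⟩; exact lt_asymm hij hab
        · rintro ⟨rfl, rfl⟩; exact lt_irrefl _ hab
  have hpsd : M.PosSemidef := by
    rw [hdecomp]
    apply Matrix.PosSemidef.add
    · exact Matrix.posSemidef_diagonal_iff.2 fun i => sub_nonneg.2 (hdd i)
    · exact Finset.sum_induction _ Matrix.PosSemidef
        (fun _ _ h1 h2 => h1.add h2) Matrix.PosSemidef.zero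
        (fun p _ => emb2R_psd p.1 p.2 (M p.1 p.2))
  exact ⟨⟨fun i => M i i - ∑ j ∈ Finset.univ.erase i, |M i j|,
    fun i j => !![|M i j|, M i j; M i j, |M i j|],
    fun i => sub_nonneg.2 (hdd i),
    fun i j _ => ⟨symm2 _, psd2 _⟩, hdecomp⟩, hpsd⟩
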